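/- Let θ be a proper convex piecewise linear function on ℝ^m, let Φ : ℝ^n × ℝ^d → ℝ^m be C²-smooth around (x̄,w̄) with z̄ := Φ(x̄,w̄) ∈ dom θ. Then for every v ∈ ∂θ(z̄) the condition ∂²θ(z̄,v)(0) ∩ ker ∇_xΦ(x̄,w̄)* = {0} holds if and only if S(z̄) ∩ ker ∇_xΦ(x̄,w̄)* = {0}; in particular, the second-order qualification condition ∂²θ(z̄,v)(0) ∩ ker ∇_xΦ(x̄,w̄)* = {0} for all v ∈ M(x̄,w̄,q̄) := {v ∈ ∂θ(z̄) : ∇_xΦ(x̄,w̄)*v = q̄} holds independently of the choice of q̄ with M(x̄,w̄,q̄) ≠ ∅ and is equivalent to S(z̄) ∩ ker ∇_xΦ(x̄,w̄)* = {0}. -/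

import Mathlib

noncomputable section
open Set Filter Topology Metric
open scoped RealInnerProductSpace Pointwise NNReal Classical

/-- `Euc m` is the Euclidean space `ℝ^m`. -/
abbrev Euc (m : ℕ) := EuclideanSpace ℝ (Fin m)

variable {F G : Type*} [NormedAddCommGroup F] [InnerProductSpace ℝ F]
  [NormedAddCommGroup G] [InnerProductSpace ℝ G]

/-- The (convex) subdifferential of an extended-real-valued function:
`∂θ(z) = {v : θ(z') ≥ θ(z) + ⟨v, z' - z⟩ for all z'}`. -/
def subdiff (θ : F → EReal) (z : F) : Set F :=
  {v | ∀ z', θ z + ((⟪v, z' - z⟫ : ℝ) : EReal) ≤ θ z'}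

/-- The Fréchet (regular) normal cone to `Ω` at `x`:
vectors `v` with `limsup_{y → x, y ∈ Ω} ⟨v, y - x⟩ / ‖y - x‖ ≤ 0`. -/
def frechetNormal (Ω : Set F) (x : F) : Set F :=
  {v | Filter.limsup (fun y => ⟪v, y - x⟫ / ‖y - x‖) (𝓝[Ω] x) ≤ 0}

/-- The limiting (Mordukhovich) normal cone to `Ω` at `x`. -/
def limitingNormal (Ω : Set F) (x : F) : Set F :=
  {v | ∃ xs vs : ℕ → F, (∀ k, xs k ∈ Ω) ∧ Filter.Tendsto xs Filter.atTop (𝓝 x) ∧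
    Filter.Tendsto vs Filter.atTop (𝓝 v) ∧ ∀ k, vs k ∈ frechetNormal Ω (xs k)}

/-- Pairing into the `ℓ²`-product of two inner product spaces. -/
def pl2 (x : F) (y : G) : WithLp 2 (F × G) := (WithLp.equiv 2 (F × G)).symm (x, y)

/-- The second-order subdifferential (generalized Hessian)
`∂²θ(z,v)(u) = {w : (w,-u) ∈ N((z,v); gph ∂θ)}`. -/
def sosd (θ : F → EReal) (z v : F) (u : F) : Set F :=
  {w | pl2 w (-u) ∈ limitingNormal
    {q : WithLp 2 (F × F) | ((WithLp.equiv 2 (F × F)) q).2 ∈ subdiff θ ((WithLp.equiv 2 (F × F)) q).1}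
    (pl2 z v)}

/-- The polyhedral domain `{z : ⟨d i, z⟩ ≤ β i for all i}` of a CPWL function. -/
def cpwlDom {m p : ℕ} (d : Fin p → Euc m) (β : Fin p → ℝ) : Set (Euc m) :=
  {z | ∀ i, ⟪d i, z⟫ ≤ β i}

/-- The CPWL function determined by the data `(a, α, d, β)`:
`θ(z) = max_i (⟨a i, z⟩ - α i)` on its polyhedral domain and `+∞` outside. -/
def cpwlFun {m l p : ℕ} (a : Fin l → Euc m) (α : Fin l → ℝ) (d : Fin p → Euc m)
    (β : Fin p → ℝ) : Euc m → EReal :=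
  fun z => if z ∈ cpwlDom d β then (((⨆ i, (⟪a i, z⟫ - α i)) : ℝ) : EReal) else ⊤

/-- Active indices of the max expression at `z`. -/
def Kact {m l p : ℕ} (a : Fin l → Euc m) (α : Fin l → ℝ) (d : Fin p → Euc m) (β : Fin p → ℝ)
    (z : Euc m) : Set (Fin l) :=
  {i | cpwlFun a α d β z = ((⟪a i, z⟫ - α i : ℝ) : EReal)}

/-- Active indices of the domain inequalities at `z`. -/
def Iact {m p : ℕ} (d : Fin p → Euc m) (β : Fin p → ℝ) (z : Euc m) : Set (Fin p) :=
  {i | ⟪d i, z⟫ = β i}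

/-- Convex conic hull: all finite nonnegative combinations of elements of `s`. -/
def coneHull (s : Set F) : Set F :=
  {x | ∃ (n : ℕ) (c : Fin n → ℝ) (y : Fin n → F), (∀ i, 0 ≤ c i) ∧ (∀ i, y i ∈ s) ∧
    x = ∑ i, c i • y i}

/-- `Spar θ z` is the linear subspace parallel to the affine hull of `∂θ(z)`. -/
def Spar (θ : F → EReal) (z : F) : Submodule ℝ F := (affineSpan ℝ (subdiff θ z)).direction

/-- A convex polyhedron: a finite intersection of closed halfspaces. -/
def IsPolyhedron {V : Type*} [AddCommGroup V] [Module ℝ V] (C : Set V) : Prop :=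
  ∃ (N : ℕ) (f : Fin N → V →ₗ[ℝ] ℝ) (b : Fin N → ℝ), C = {x | ∀ i, f i x ≤ b i}

/-- A proper convex piecewise linear function with values in `ℝ ∪ {+∞}`:
its epigraph is a convex polyhedron, it never takes the value `-∞`, and it is
not identically `+∞`. -/
def IsCPWL {V : Type*} [AddCommGroup V] [Module ℝ V] (f : V → EReal) : Prop :=
  IsPolyhedron {xt : V × ℝ | f xt.1 ≤ (xt.2 : EReal)} ∧ (∀ x, f x ≠ ⊥) ∧ (∃ x, f x ≠ ⊤)

/-- Local argmin set `M_γ(w,v)` of `x ↦ φ(x,w) - ⟨v,x⟩` over the ball `‖x - xb‖ ≤ γ`,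
with the convention that minimizers at which the objective is `+∞` are discarded. -/
def argminLoc {n d : ℕ} (φ : Euc n → Euc d → EReal) (xb : Euc n) (γ : ℝ) (w : Euc d)
    (v : Euc n) : Set (Euc n) :=
  {x | ‖x - xb‖ ≤ γ ∧ φ x w ≠ ⊤ ∧
    ∀ y, ‖y - xb‖ ≤ γ → φ x w - ((⟪v, x⟫ : ℝ) : EReal) ≤ φ y w - ((⟪v, y⟫ : ℝ) : EReal)}

/-- Local optimal value `m_γ(w,v)` of `x ↦ φ(x,w) - ⟨v,x⟩` over the ball `‖x - xb‖ ≤ γ`. -/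
def infLoc {n d : ℕ} (φ : Euc n → Euc d → EReal) (xb : Euc n) (γ : ℝ) (w : Euc d)
    (v : Euc n) : EReal :=
  ⨅ x ∈ {x : Euc n | ‖x - xb‖ ≤ γ}, (φ x w - ((⟪v, x⟫ : ℝ) : EReal))

/-- `xb` is a fully stable locally optimal solution of
`minimize φ(x,wb) - ⟨vb,x⟩` : for some `γ > 0` and neighborhoods `W × V` of `(wb,vb)`,
the local argmin map is single-valued and Lipschitz with value `xb` at `(wb,vb)`, and the
local optimal value function is finite and Lipschitz. -/
def FullyStableSol {n d : ℕ} (φ : Euc n → Euc d → EReal) (xb : Euc n) (wb : Euc d)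
    (vb : Euc n) : Prop :=
  ∃ γ > (0 : ℝ), ∃ W ∈ 𝓝 wb, ∃ V ∈ 𝓝 vb,
    (∃ σ : Euc d × Euc n → Euc n,
      (∃ K : ℝ≥0, LipschitzOnWith K σ (W ×ˢ V)) ∧
      (∀ w ∈ W, ∀ v ∈ V, argminLoc φ xb γ w v = {σ (w, v)}) ∧ σ (wb, vb) = xb) ∧
    (∃ μ : Euc d × Euc n → ℝ,
      (∃ K : ℝ≥0, LipschitzOnWith K μ (W ×ˢ V)) ∧
      ∀ w ∈ W, ∀ v ∈ V, infLoc φ xb γ w v = ((μ (w, v) : ℝ) : EReal))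

/-- The partial limiting subdifferential `∂ₓψ(x,w)` defined through the limiting normal
cone to the epigraph of `ψ(·,w)`. -/
def partialSubdiffX {n d : ℕ} (ψ : Euc n → Euc d → EReal) (x : Euc n) (w : Euc d) :
    Set (Euc n) :=
  {v | ∃ r : ℝ, ψ x w = (r : EReal) ∧
    pl2 v (-1 : ℝ) ∈ limitingNormal
      {q : WithLp 2 (Euc n × ℝ) |
        ψ ((WithLp.equiv 2 (Euc n × ℝ)) q).1 w ≤ ((((WithLp.equiv 2 (Euc n × ℝ)) q).2 : ℝ) : EReal)}
      (pl2 x r)}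

/-- The coderivative `D*∂ₓψ(xb,wb,qb)(u)` of the partial subdifferential mapping,
via the limiting normal cone to its graph in `ℝ^n × ℝ^d × ℝ^n`. -/
def coderivPartialSubdiffX {n d : ℕ} (ψ : Euc n → Euc d → EReal) (xb : Euc n) (wb : Euc d)
    (qb : Euc n) (u : Euc n) : Set (Euc n × Euc d) :=
  {P | pl2 (pl2 P.1 P.2) (-u) ∈ limitingNormal
    {t : WithLp 2 (WithLp 2 (Euc n × Euc d) × Euc n) |
      ((WithLp.equiv 2 (WithLp 2 (Euc n × Euc d) × Euc n)) t).2 ∈ partialSubdiffX ψ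
        ((WithLp.equiv 2 (Euc n × Euc d)) (((WithLp.equiv 2 (WithLp 2 (Euc n × Euc d) × Euc n)) t).1)).1
        ((WithLp.equiv 2 (Euc n × Euc d)) (((WithLp.equiv 2 (WithLp 2 (Euc n × Euc d) × Euc n)) t).1)).2}
    (pl2 (pl2 xb wb) qb)}

/-- Partial Hessian in `x` : the derivative in `x` of the partial gradient in `x`. -/
def hessXX {n d : ℕ} (g : Euc n → Euc d → ℝ) (xb : Euc n) (wb : Euc d) : Euc n →L[ℝ] Euc n :=
  fderiv ℝ (fun x => gradient (fun x' => g x' wb) x) xb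

/-- Mixed partial Hessian: derivative in `w` of the partial gradient in `x`. -/
def hessWX {n d : ℕ} (g : Euc n → Euc d → ℝ) (xb : Euc n) (wb : Euc d) : Euc d →L[ℝ] Euc n :=
  fderiv ℝ (fun w => gradient (fun x' => g x' w) xb) wb

section AuxLemmas

section basics
variable {m l p : ℕ} {a : Fin l → Euc m} {α : Fin l → ℝ} {d : Fin p → Euc m} {β : Fin p → ℝ}

/-- the finite max -/
def gmax (a : Fin l → Euc m) (α : Fin l → ℝ) (z : Euc m) : ℝ := ⨆ i, (⟪a i, z⟫ - α i)

lemma cpwl_of_mem {z : Euc m} (hz : z ∈ cpwlDom d β) :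
    cpwlFun a α d β z = ((gmax a α z : ℝ) : EReal) := if_pos hz

lemma cpwl_of_not_mem {z : Euc m} (hz : z ∉ cpwlDom d β) :
    cpwlFun a α d β z = ⊤ := if_neg hz

lemma term_le_gmax (z : Euc m) (i : Fin l) : ⟪a i, z⟫ - α i ≤ gmax a α z :=
  le_ciSup (Set.Finite.bddAbove (Set.finite_range (fun j => ⟪a j, z⟫ - α j))) i

lemma exists_gmax (hl : 0 < l) (z : Euc m) : ∃ i, gmax a α z = ⟪a i, z⟫ - α i := by
  have : Nonempty (Fin l) := ⟨⟨0, hl⟩⟩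
  obtain ⟨i, hi⟩ := Finite.exists_max (fun i : Fin l => ⟪a i, z⟫ - α i)
  exact ⟨i, le_antisymm (ciSup_le hi) (term_le_gmax z i)⟩

lemma mem_Kact_iff (hz : z ∈ cpwlDom d β) {i : Fin l} :
    i ∈ Kact a α d β z ↔ gmax a α z = ⟪a i, z⟫ - α i := by
  rw [Kact, Set.mem_setOf_eq, cpwl_of_mem hz, EReal.coe_eq_coe_iff]

lemma exists_Kact (hl : 0 < l) {z : Euc m} (hz : z ∈ cpwlDom d β) :
    ∃ i, i ∈ Kact a α d β z := by
  obtain ⟨i, hi⟩ := exists_gmax (a := a) (α := α) hl z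
  exact ⟨i, (mem_Kact_iff hz).2 hi⟩

lemma cpwl_ne_bot (z : Euc m) : cpwlFun a α d β z ≠ ⊥ := by
  rw [cpwlFun]; split
  · exact EReal.coe_ne_bot _
  · simp

/-- real form of the subgradient inequality -/
lemma subdiff_real {z z' : Euc m} {v : Euc m} (hv : v ∈ subdiff (cpwlFun a α d β) z)
    (hz : z ∈ cpwlDom d β) (hz' : z' ∈ cpwlDom d β) :
    gmax a α z + ⟪v, z' - z⟫ ≤ gmax a α z' := by
  have := hv z'
  rw [cpwl_of_mem hz, cpwl_of_mem hz', ← EReal.coe_add, EReal.coe_le_coe_iff] at this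
  exact this

lemma mem_dom_of_subdiff {z : Euc m} {v : Euc m} (hv : v ∈ subdiff (cpwlFun a α d β) z)
    (z₀ : Euc m) (hz₀ : z₀ ∈ cpwlDom d β) : z ∈ cpwlDom d β := by
  by_contra h
  have := hv z₀
  rw [cpwl_of_not_mem h, cpwl_of_mem hz₀, EReal.top_add_coe] at this
  exact (this.trans_lt (EReal.coe_lt_top _)).false

/-- monotonicity of the subdifferential -/
lemma subdiff_mono {z z' v v' : Euc m} (hv : v ∈ subdiff (cpwlFun a α d β) z)
    (hv' : v' ∈ subdiff (cpwlFun a α d β) z')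
    (hz : z ∈ cpwlDom d β) (hz' : z' ∈ cpwlDom d β) :
    ⟪v' - v, z' - z⟫ ≥ 0 := by
  have h1 := subdiff_real hv hz hz'
  have h2 := subdiff_real hv' hz' hz
  have h3 : ⟪v, z' - z⟫ + ⟪v', z - z'⟫ ≤ 0 := by linarith
  have h4 : ⟪v', z - z'⟫ = -⟪v', z' - z⟫ := by
    rw [← inner_neg_right]; congr 1; abel
  rw [inner_sub_left]; linarith

lemma subdiff_convex (z : Euc m) : Convex ℝ (subdiff (cpwlFun a α d β) z) := by
  intro v₁ h₁ v₂ h₂ s t hs ht hst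
  intro z'
  by_cases hz : z ∈ cpwlDom d β
  · by_cases hz' : z' ∈ cpwlDom d β
    · rw [cpwl_of_mem hz, cpwl_of_mem hz', ← EReal.coe_add, EReal.coe_le_coe_iff]
      have e1 := subdiff_real h₁ hz hz'
      have e2 := subdiff_real h₂ hz hz'
      have : ⟪s • v₁ + t • v₂, z' - z⟫ = s * ⟪v₁, z' - z⟫ + t * ⟪v₂, z' - z⟫ := by
        rw [inner_add_left, real_inner_smul_left, real_inner_smul_left]
      rw [this]
      have f1 := mul_le_mul_of_nonneg_left e1 hs
      have f2 := mul_le_mul_of_nonneg_left e2 ht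
      have hgz : s * gmax a α z + t * gmax a α z = gmax a α z := by
        rw [← add_mul, hst, one_mul]
      have hgz' : s * gmax a α z' + t * gmax a α z' = gmax a α z' := by
        rw [← add_mul, hst, one_mul]
      nlinarith [f1, f2]
    · rw [cpwl_of_not_mem hz']; exact le_top
  · have htop : cpwlFun a α d β z' = ⊤ := by
      have := h₁ z'
      rw [cpwl_of_not_mem hz, EReal.top_add_coe] at this
      exact top_le_iff.mp this
    rw [htop]; exact le_top

lemma a_mem_subdiff {z : Euc m} (hz : z ∈ cpwlDom d β) {i : Fin l}
    (hi : i ∈ Kact a α d β z) : a i ∈ subdiff (cpwlFun a α d β) z := by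
  intro z'
  by_cases hz' : z' ∈ cpwlDom d β
  · rw [cpwl_of_mem hz, cpwl_of_mem hz', ← EReal.coe_add, EReal.coe_le_coe_iff]
    have hg : gmax a α z = ⟪a i, z⟫ - α i := (mem_Kact_iff hz).1 hi
    rw [hg, inner_sub_right]
    have := term_le_gmax (a := a) (α := α) z' i
    linarith
  · rw [cpwl_of_not_mem hz']; exact le_top

lemma add_d_mem_subdiff {z : Euc m} {i : Fin p} (hi : i ∈ Iact d β z) {v : Euc m}
    (hv : v ∈ subdiff (cpwlFun a α d β) z) : v + d i ∈ subdiff (cpwlFun a α d β) z := by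
  intro z'
  by_cases hz' : z' ∈ cpwlDom d β
  · have key : ⟪v + d i, z' - z⟫ ≤ ⟪v, z' - z⟫ := by
      rw [inner_add_left]
      have h1 : ⟪d i, z' - z⟫ ≤ 0 := by
        rw [inner_sub_right]
        have h2 : ⟪d i, z⟫ = β i := hi
        have := hz' i
        linarith
      linarith
    calc cpwlFun a α d β z + ((⟪v + d i, z' - z⟫ : ℝ) : EReal)
        ≤ cpwlFun a α d β z + ((⟪v, z' - z⟫ : ℝ) : EReal) :=
          add_le_add_right (EReal.coe_le_coe_iff.2 key) _
      _ ≤ cpwlFun a α d β z' := hv z'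
  · rw [cpwl_of_not_mem hz']; exact le_top

lemma d_mem_Spar {z : Euc m} {v : Euc m} (hv : v ∈ subdiff (cpwlFun a α d β) z)
    {i : Fin p} (hi : i ∈ Iact d β z) : d i ∈ Spar (cpwlFun a α d β) z := by
  have h1 := add_d_mem_subdiff (a := a) (α := α) hi hv
  have := AffineSubspace.vsub_mem_direction (subset_affineSpan ℝ _ h1) (subset_affineSpan ℝ _ hv)
  simpa [Spar] using this

lemma a_sub_mem_Spar {z : Euc m} (hz : z ∈ cpwlDom d β) {i j : Fin l}
    (hi : i ∈ Kact a α d β z) (hj : j ∈ Kact a α d β z) :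
    a i - a j ∈ Spar (cpwlFun a α d β) z :=
  AffineSubspace.vsub_mem_direction
    (subset_affineSpan ℝ _ (a_mem_subdiff hz hi)) (subset_affineSpan ℝ _ (a_mem_subdiff hz hj))

lemma inner_continuous (v : Euc m) : Continuous fun z : Euc m => (⟪v, z⟫ : ℝ) :=
  continuous_const.inner continuous_id

lemma eventually_active {zb : Euc m} (hzb : zb ∈ cpwlDom d β) :
    ∀ᶠ z in 𝓝 zb, Kact a α d β z ⊆ Kact a α d β zb ∧ Iact d β z ⊆ Iact d β zb := by
  rw [eventually_and]
  constructor
  · have H : ∀ i : Fin l, ∀ᶠ z in 𝓝 zb, i ∈ Kact a α d β z → i ∈ Kact a α d β zb := by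
      intro i
      by_cases hi : i ∈ Kact a α d β zb
      · exact Eventually.of_forall fun z _ => hi
      · have hne : gmax a α zb ≠ ⟪a i, zb⟫ - α i := fun h => hi ((mem_Kact_iff hzb).2 h)
        have hlt : ⟪a i, zb⟫ - α i < gmax a α zb :=
          lt_of_le_of_ne (term_le_gmax zb i) (Ne.symm hne)
        have hex : ∃ j : Fin l, ⟪a i, zb⟫ - α i < ⟪a j, zb⟫ - α j := by
          by_contra h
          push_neg at h
          have : Nonempty (Fin l) := ⟨i⟩
          exact absurd (ciSup_le h) (not_le.2 hlt)
        obtain ⟨j, hj⟩ := hex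
        have hcont : Continuous fun z : Euc m => (⟪a i, z⟫ - α i : ℝ) :=
          (inner_continuous (a i)).sub continuous_const
        have hcont' : Continuous fun z : Euc m => (⟪a j, z⟫ - α j : ℝ) :=
          (inner_continuous (a j)).sub continuous_const
        have hop : IsOpen {z : Euc m | (⟪a i, z⟫ - α i : ℝ) < ⟪a j, z⟫ - α j} :=
          isOpen_lt hcont hcont'
        filter_upwards [hop.eventually_mem hj] with z hz hKz
        exfalso
        by_cases hzd : z ∈ cpwlDom d β
        · have hg : gmax a α z = ⟪a i, z⟫ - α i := (mem_Kact_iff hzd).1 hKz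
          have := term_le_gmax (a := a) (α := α) z j
          have hz' : (⟪a i, z⟫ - α i : ℝ) < ⟪a j, z⟫ - α j := hz
          linarith
        · have : cpwlFun a α d β z = ⊤ := cpwl_of_not_mem hzd
          rw [Kact, Set.mem_setOf_eq, this] at hKz
          exact EReal.coe_ne_top _ hKz.symm
    have := Filter.eventually_all.2 H
    filter_upwards [this] with z hz
    exact fun i hi => hz i hi
  · have H : ∀ i : Fin p, ∀ᶠ z in 𝓝 zb, i ∈ Iact d β z → i ∈ Iact d β zb := by
      intro i
      by_cases hi : i ∈ Iact d β zb
      · exact Eventually.of_forall fun z _ => hi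
      · have hlt : ⟪d i, zb⟫ < β i := lt_of_le_of_ne (hzb i) hi
        have hop : IsOpen {z : Euc m | (⟪d i, z⟫ : ℝ) < β i} :=
          isOpen_lt (inner_continuous (d i)) continuous_const
        filter_upwards [hop.eventually_mem hlt] with z hz hIz
        exact absurd hIz (ne_of_lt hz)
    have := Filter.eventually_all.2 H
    filter_upwards [this] with z hz
    exact fun i hi => hz i hi

lemma inner_add_smul (u z c : Euc m) (t : ℝ) : ⟪u, z + t • c⟫ = ⟪u, z⟫ + t * ⟪u, c⟫ := by
  rw [inner_add_right, real_inner_smul_right]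

lemma persist (hl : 0 < l) {zb : Euc m} (hzb : zb ∈ cpwlDom d β) {vb : Euc m}
    (hvb : vb ∈ subdiff (cpwlFun a α d β) zb) {c : Euc m}
    (hc : ∀ s ∈ Spar (cpwlFun a α d β) zb, ⟪s, c⟫ = 0)
    {z : Euc m} (hz : z ∈ cpwlDom d β)
    (hK : Kact a α d β z ⊆ Kact a α d β zb) (hI : Iact d β z ⊆ Iact d β zb)
    {v : Euc m} (hv : v ∈ subdiff (cpwlFun a α d β) z) :
    ∃ ε > 0, ∀ t : ℝ, |t| ≤ ε → v ∈ subdiff (cpwlFun a α d β) (z + t • c) := by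
  obtain ⟨i₀, hi₀⟩ := exists_Kact hl hz
  set s₀ : ℝ := ⟪a i₀, c⟫ with hs₀
  -- eventually in t, z + t c ∈ dom
  have E1 : ∀ᶠ t in 𝓝 (0 : ℝ), z + t • c ∈ cpwlDom d β := by
    have : ∀ᶠ t in 𝓝 (0 : ℝ), ∀ i, ⟪d i, z + t • c⟫ ≤ β i := by
      rw [Filter.eventually_all]
      intro i
      by_cases hi : i ∈ Iact d β z
      · have hdc : ⟪d i, c⟫ = 0 := hc (d i) (d_mem_Spar hvb (hI hi))
        refine Eventually.of_forall fun t => ?_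
        rw [inner_add_smul, hdc, mul_zero, add_zero]
        exact le_of_eq hi
      · have hlt : ⟪d i, z⟫ < β i := lt_of_le_of_ne (hz i) hi
        have hco : Continuous fun t : ℝ => ⟪d i, z⟫ + t * ⟪d i, c⟫ := by fun_prop
        have hop : IsOpen {t : ℝ | ⟪d i, z⟫ + t * ⟪d i, c⟫ < β i} :=
          isOpen_lt hco continuous_const
        have h0 : (0 : ℝ) ∈ {t : ℝ | ⟪d i, z⟫ + t * ⟪d i, c⟫ < β i} := by
          simpa using hlt
        filter_upwards [hop.eventually_mem h0] with t ht
        rw [inner_add_smul]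
        exact le_of_lt ht
    exact this
  -- eventually, gmax (z + t c) = gmax z + t * s₀
  have hKc : ∀ i ∈ Kact a α d β z, ⟪a i, c⟫ = s₀ := by
    intro i hi
    have := hc (a i - a i₀) (a_sub_mem_Spar hzb (hK hi) (hK hi₀))
    rw [inner_sub_left] at this
    linarith
  have E2 : ∀ᶠ t in 𝓝 (0 : ℝ), gmax a α (z + t • c) = gmax a α z + t * s₀ := by
    have hub : ∀ᶠ t in 𝓝 (0 : ℝ), ∀ i, ⟪a i, z + t • c⟫ - α i ≤ gmax a α z + t * s₀ := by
      rw [Filter.eventually_all]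
      intro i
      by_cases hi : i ∈ Kact a α d β z
      · refine Eventually.of_forall fun t => ?_
        rw [inner_add_smul, hKc i hi]
        have : gmax a α z = ⟪a i, z⟫ - α i := (mem_Kact_iff hz).1 hi
        linarith [le_of_eq this]
      · have hne : gmax a α z ≠ ⟪a i, z⟫ - α i := fun h => hi ((mem_Kact_iff hz).2 h)
        have hlt : ⟪a i, z⟫ - α i < gmax a α z :=
          lt_of_le_of_ne (term_le_gmax z i) (Ne.symm hne)
        have hco : Continuous fun t : ℝ => (⟪a i, z⟫ + t * ⟪a i, c⟫) - α i := by fun_prop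
        have hco' : Continuous fun t : ℝ => gmax a α z + t * s₀ := by fun_prop
        have hop : IsOpen {t : ℝ | (⟪a i, z⟫ + t * ⟪a i, c⟫) - α i < gmax a α z + t * s₀} :=
          isOpen_lt hco hco'
        have h0 : (0 : ℝ) ∈ {t : ℝ | (⟪a i, z⟫ + t * ⟪a i, c⟫) - α i < gmax a α z + t * s₀} := by
          simpa using hlt
        filter_upwards [hop.eventually_mem h0] with t ht
        rw [inner_add_smul]
        exact le_of_lt ht
    filter_upwards [hub] with t ht
    have hi₀t : ⟪a i₀, z + t • c⟫ - α i₀ = gmax a α z + t * s₀ := by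
      rw [inner_add_smul]
      have : gmax a α z = ⟪a i₀, z⟫ - α i₀ := (mem_Kact_iff hz).1 hi₀
      rw [this]; ring
    have : Nonempty (Fin l) := ⟨i₀⟩
    refine le_antisymm (ciSup_le ht) ?_
    rw [← hi₀t]
    exact term_le_gmax _ i₀
  -- extract ε
  obtain ⟨ε', hε', hP⟩ := Metric.eventually_nhds_iff.1 (E1.and E2)
  set ε : ℝ := ε' / 2 with hε
  have hεpos : 0 < ε := by positivity
  have hPt : ∀ t : ℝ, |t| ≤ ε → (z + t • c ∈ cpwlDom d β ∧
      gmax a α (z + t • c) = gmax a α z + t * s₀) := by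
    intro t ht
    apply hP
    rw [Real.dist_eq, sub_zero]
    linarith
  -- slope
  have hslope : ⟪v, c⟫ = s₀ := by
    have h1 := hPt ε (by rw [abs_of_pos hεpos])
    have h2 := hPt (-ε) (by rw [abs_neg, abs_of_pos hεpos])
    have g1 := subdiff_real hv hz h1.1
    have g2 := subdiff_real hv hz h2.1
    rw [h1.2] at g1
    rw [h2.2] at g2
    have e1 : ⟪v, z + ε • c - z⟫ = ε * ⟪v, c⟫ := by
      rw [add_sub_cancel_left, real_inner_smul_right]
    have e2 : ⟪v, z + (-ε) • c - z⟫ = -ε * ⟪v, c⟫ := by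
      rw [add_sub_cancel_left, real_inner_smul_right]
    rw [e1] at g1
    rw [e2] at g2
    have le1 : ⟪v, c⟫ ≤ s₀ := by nlinarith
    have le2 : s₀ ≤ ⟪v, c⟫ := by nlinarith
    linarith
  refine ⟨ε, hεpos, fun t ht => ?_⟩
  obtain ⟨hdomt, hgt⟩ := hPt t ht
  intro z'
  by_cases hz' : z' ∈ cpwlDom d β
  · rw [cpwl_of_mem hdomt, cpwl_of_mem hz', ← EReal.coe_add, EReal.coe_le_coe_iff, hgt]
    have := subdiff_real hv hz hz'
    have e3 : ⟪v, z' - (z + t • c)⟫ = ⟪v, z' - z⟫ - t * ⟪v, c⟫ := by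
      have : z' - (z + t • c) = (z' - z) - t • c := by abel
      rw [this, inner_sub_right, real_inner_smul_right]
    rw [e3, hslope]
    linarith
  · rw [cpwl_of_not_mem hz']; exact le_top

end basics

section pl2lemmas

lemma pl2_sub (x x' : F) (y y' : G) : pl2 x y - pl2 x' y' = pl2 (x - x') (y - y') := rfl

lemma pl2_equiv_apply (x : F) (y : G) : (WithLp.equiv 2 (F × G)) (pl2 x y) = (x, y) := rfl

lemma pl2_inner (w x : F) (u y : G) : ⟪pl2 w u, pl2 x y⟫ = ⟪w, x⟫ + ⟪u, y⟫ := by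
  rw [WithLp.prod_inner_apply]; rfl

lemma pl2_norm_sq (x : F) (y : G) : ‖pl2 x y‖ ^ 2 = ‖x‖ ^ 2 + ‖y‖ ^ 2 := by
  rw [← real_inner_self_eq_norm_sq, WithLp.prod_inner_apply]
  show ⟪x, x⟫ + ⟪y, y⟫ = _
  rw [real_inner_self_eq_norm_sq, real_inner_self_eq_norm_sq]

lemma pl2_norm_fst_le (x : F) (y : G) : ‖x‖ ≤ ‖pl2 x y‖ := by
  have h1 : ‖x‖ ^ 2 ≤ ‖pl2 x y‖ ^ 2 := by
    rw [pl2_norm_sq]; nlinarith [norm_nonneg y]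
  calc ‖x‖ = Real.sqrt (‖x‖ ^ 2) := (Real.sqrt_sq (norm_nonneg x)).symm
    _ ≤ Real.sqrt (‖pl2 x y‖ ^ 2) := Real.sqrt_le_sqrt h1
    _ = ‖pl2 x y‖ := Real.sqrt_sq (norm_nonneg _)

lemma pl2_norm_snd_le (x : F) (y : G) : ‖y‖ ≤ ‖pl2 x y‖ := by
  have h1 : ‖y‖ ^ 2 ≤ ‖pl2 x y‖ ^ 2 := by
    rw [pl2_norm_sq]; nlinarith [norm_nonneg x]
  calc ‖y‖ = Real.sqrt (‖y‖ ^ 2) := (Real.sqrt_sq (norm_nonneg y)).symm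
    _ ≤ Real.sqrt (‖pl2 x y‖ ^ 2) := Real.sqrt_le_sqrt h1
    _ = ‖pl2 x y‖ := Real.sqrt_sq (norm_nonneg _)

lemma pl2_norm_fst_zero (x : F) : ‖pl2 x (0 : G)‖ = ‖x‖ := by
  have h1 : ‖pl2 x (0 : G)‖ ^ 2 = ‖x‖ ^ 2 := by rw [pl2_norm_sq]; simp
  calc ‖pl2 x (0:G)‖ = Real.sqrt (‖pl2 x (0:G)‖ ^ 2) := (Real.sqrt_sq (norm_nonneg _)).symm
    _ = Real.sqrt (‖x‖ ^ 2) := by rw [h1]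
    _ = ‖x‖ := Real.sqrt_sq (norm_nonneg _)

lemma pl2_smul (t : ℝ) (c : F) : pl2 (t • c) (0 : G) = t • pl2 c 0 := by
  have : t • pl2 c (0:G) = pl2 (t • c) (t • (0:G)) := rfl
  rw [this, smul_zero]

lemma pl2_tendsto_iff {ι : Type*} {L : Filter ι} {q : ι → WithLp 2 (F × G)} {x : F} {y : G} :
    Filter.Tendsto q L (𝓝 (pl2 x y)) ↔
      Filter.Tendsto (fun i => ((WithLp.equiv 2 (F × G)) (q i)).1) L (𝓝 x) ∧
      Filter.Tendsto (fun i => ((WithLp.equiv 2 (F × G)) (q i)).2) L (𝓝 y) := by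
  have hc1 : Continuous fun q : WithLp 2 (F × G) => ((WithLp.equiv 2 (F × G)) q).1 :=
    (WithLp.prodContinuousLinearEquiv 2 ℝ F G).continuous.fst
  have hc2 : Continuous fun q : WithLp 2 (F × G) => ((WithLp.equiv 2 (F × G)) q).2 :=
    (WithLp.prodContinuousLinearEquiv 2 ℝ F G).continuous.snd
  constructor
  · intro h
    exact ⟨(hc1.tendsto (pl2 x y)).comp h, (hc2.tendsto (pl2 x y)).comp h⟩
  · rintro ⟨h1, h2⟩
    have h3 : Filter.Tendsto (fun i => (WithLp.prodContinuousLinearEquiv 2 ℝ F G) (q i)) L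
        (𝓝 (x, y)) := h1.prodMk_nhds h2
    have := ((WithLp.prodContinuousLinearEquiv 2 ℝ F G).symm.continuous.tendsto (x, y)).comp h3
    exact this

lemma abs_frechet_quot_le (v y x : F) : |⟪v, y - x⟫ / ‖y - x‖| ≤ ‖v‖ := by
  rcases eq_or_ne (y - x) 0 with h | h
  · rw [h]; simp
  · have hn : 0 < ‖y - x‖ := norm_pos_iff.2 h
    rw [abs_div, abs_of_pos hn, div_le_iff₀ hn]
    exact (abs_real_inner_le_norm v (y - x)).trans (le_of_eq rfl)

lemma frechet_of_bound {Ω : Set F} {x : F} (hx : x ∈ Ω) {v : F} {C : ℝ} (hC : 0 ≤ C)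
    (h : ∀ y ∈ Ω, ⟪v, y - x⟫ / ‖y - x‖ ≤ C * ‖y - x‖) : v ∈ frechetNormal Ω x := by
  haveI : (𝓝[Ω] x).NeBot := nhdsWithin_neBot_of_mem hx
  have hg : Filter.Tendsto (fun y : F => C * ‖y - x‖) (𝓝[Ω] x) (𝓝 0) := by
    have : Filter.Tendsto (fun y : F => C * ‖y - x‖) (𝓝 x) (𝓝 (C * ‖x - x‖)) := by
      apply Filter.Tendsto.const_mul
      exact ((continuous_id.sub continuous_const).norm.tendsto x)
    simpa using this.mono_left nhdsWithin_le_nhds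
  have hle : (fun y : F => ⟪v, y - x⟫ / ‖y - x‖) ≤ᶠ[𝓝[Ω] x] fun y => C * ‖y - x‖ :=
    eventually_nhdsWithin_of_forall h
  have hcb : Filter.IsCoboundedUnder (· ≤ ·) (𝓝[Ω] x) (fun y : F => ⟪v, y - x⟫ / ‖y - x‖) := by
    apply Filter.IsBoundedUnder.isCoboundedUnder_le
    exact Filter.isBoundedUnder_of ⟨-‖v‖, fun y => (abs_le.1 (abs_frechet_quot_le v y x)).1⟩
  have hbd : Filter.IsBoundedUnder (· ≤ ·) (𝓝[Ω] x) (fun y : F => C * ‖y - x‖) :=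
    hg.isBoundedUnder_le
  calc Filter.limsup (fun y : F => ⟪v, y - x⟫ / ‖y - x‖) (𝓝[Ω] x)
      ≤ Filter.limsup (fun y : F => C * ‖y - x‖) (𝓝[Ω] x) :=
        Filter.limsup_le_limsup hle hcb hbd
    _ = 0 := hg.limsup_eq

lemma frechet_val_le {Ω : Set F} {x v : F} (hv : v ∈ frechetNormal Ω x)
    {ι : Type*} {L : Filter ι} [L.NeBot] {q : ι → F} (hq : Filter.Tendsto q L (𝓝 x))
    (hmem : ∀ᶠ t in L, q t ∈ Ω) {A : ℝ}
    (hval : ∀ᶠ t in L, ⟪v, q t - x⟫ / ‖q t - x‖ = A) : A ≤ 0 := by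
  by_contra hA
  push_neg at hA
  have hbd : Filter.IsBoundedUnder (· ≤ ·) (𝓝[Ω] x)
      (fun y : F => ⟪v, y - x⟫ / ‖y - x‖) :=
    Filter.isBoundedUnder_of ⟨‖v‖, fun y => (abs_le.1 (abs_frechet_quot_le v y x)).2⟩
  have hev := Filter.eventually_lt_of_limsup_lt (lt_of_le_of_lt hv hA) hbd
  rw [eventually_nhdsWithin_iff] at hev
  have hev2 := hq.eventually hev
  obtain ⟨t, ht1, ht2, ht3⟩ := (hmem.and (hev2.and hval)).exists
  rw [ht3] at ht2
  exact lt_irrefl A (ht2 ht1)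

end pl2lemmas

section main
variable {m l p : ℕ} {a : Fin l → Euc m} {α : Fin l → ℝ} {d : Fin p → Euc m} {β : Fin p → ℝ}

lemma zero_mem_frechetNormal {E : Type*} [NormedAddCommGroup E] [InnerProductSpace ℝ E]
    {Ω : Set E} {x : E} (hx : x ∈ Ω) : (0 : E) ∈ frechetNormal Ω x := by
  haveI : (𝓝[Ω] x).NeBot := nhdsWithin_neBot_of_mem hx
  have : (fun y : E => ⟪(0 : E), y - x⟫ / ‖y - x‖) = fun _ => (0 : ℝ) := by
    funext y; rw [inner_zero_left, zero_div]
  rw [frechetNormal, Set.mem_setOf_eq, this, Filter.limsup_const]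

set_option maxHeartbeats 1000000 in
lemma rel_ball {zb : Euc m} {vb : Euc m}
    (hvb : vb ∈ subdiff (cpwlFun a α d β) zb) :
    ∃ v₀ ∈ subdiff (cpwlFun a α d β) zb, ∃ ε₀ > (0:ℝ),
      ∀ s : Euc m, s ∈ Spar (cpwlFun a α d β) zb → ‖s‖ < ε₀ →
        v₀ + s ∈ subdiff (cpwlFun a α d β) zb := by
  obtain ⟨v₀, hv₀⟩ := Set.Nonempty.intrinsicInterior (subdiff_convex zb) ⟨vb, hvb⟩
  obtain ⟨y₀, hy₀, hy₀v⟩ := mem_intrinsicInterior.1 hv₀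
  have hv₀mem : v₀ ∈ subdiff (cpwlFun a α d β) zb := by
    have := interior_subset hy₀
    rwa [Set.mem_preimage, hy₀v] at this
  have hv₀span : v₀ ∈ affineSpan ℝ (subdiff (cpwlFun a α d β) zb) := by
    rw [← hy₀v]; exact y₀.2
  have hnh := mem_interior_iff_mem_nhds.1 hy₀
  rw [nhds_subtype_eq_comap, Filter.mem_comap] at hnh
  obtain ⟨U, hU, hUsub⟩ := hnh
  rw [hy₀v] at hU
  obtain ⟨ε₀, hε₀, hball⟩ := Metric.mem_nhds_iff.1 hU
  refine ⟨v₀, hv₀mem, ε₀, hε₀, fun s hs hsn => ?_⟩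
  have hmem : v₀ + s ∈ affineSpan ℝ (subdiff (cpwlFun a α d β) zb) := by
    have := AffineSubspace.vadd_mem_of_mem_direction hs hv₀span
    simpa [add_comm] using this
  have hUmem : v₀ + s ∈ U := by
    apply hball
    rw [Metric.mem_ball, dist_eq_norm, add_sub_cancel_left]
    exact hsn
  have hfin := hUsub
    (show (⟨v₀ + s, hmem⟩ : affineSpan ℝ (subdiff (cpwlFun a α d β) zb)) ∈ Subtype.val ⁻¹' U
      from hUmem)
  exact hfin

set_option maxHeartbeats 1000000 in
lemma Spar_subset_sosd (hl : 0 < l) {zb vb : Euc m} (hzb : zb ∈ cpwlDom d β)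
    (hvb : vb ∈ subdiff (cpwlFun a α d β) zb) :
    (Spar (cpwlFun a α d β) zb : Set (Euc m)) ⊆ sosd (cpwlFun a α d β) zb vb 0 := by
  intro w hw
  show pl2 w (-(0 : Euc m)) ∈ limitingNormal
    {q : WithLp 2 (Euc m × Euc m) | ((WithLp.equiv 2 (Euc m × Euc m)) q).2 ∈
      subdiff (cpwlFun a α d β) ((WithLp.equiv 2 (Euc m × Euc m)) q).1} (pl2 zb vb)
  rw [neg_zero]
  obtain ⟨v₀, hv₀mem, ε₀, hε₀, hball'⟩ := rel_ball hvb
  -- the approximating sequence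
  have htpos : ∀ k : ℕ, 0 < 1 / ((k : ℝ) + 1) := fun k => by positivity
  have htle : ∀ k : ℕ, 1 / ((k : ℝ) + 1) ≤ 1 := by
    intro k
    rw [div_le_one (by positivity)]
    norm_num
  have hvmem : ∀ k : ℕ, vb + (1 / ((k : ℝ) + 1)) • (v₀ - vb) ∈ subdiff (cpwlFun a α d β) zb := by
    intro k
    have hcomb := subdiff_convex (a := a) (α := α) (d := d) (β := β) zb hvb hv₀mem
      (by linarith [htle k] : (0:ℝ) ≤ 1 - 1 / ((k : ℝ) + 1)) (le_of_lt (htpos k)) (by ring)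
    have : (1 - 1 / ((k : ℝ) + 1)) • vb + (1 / ((k : ℝ) + 1)) • v₀
        = vb + (1 / ((k : ℝ) + 1)) • (v₀ - vb) := by
      rw [smul_sub, sub_smul, one_smul]; abel
    rwa [this] at hcomb
  have hrel : ∀ k : ℕ, ∀ s : Euc m, s ∈ Spar (cpwlFun a α d β) zb →
      ‖s‖ ≤ (1 / ((k : ℝ) + 1)) * (ε₀ / 2) →
      (vb + (1 / ((k : ℝ) + 1)) • (v₀ - vb)) + s ∈ subdiff (cpwlFun a α d β) zb := by
    intro k s hs hsn
    have htk := htpos k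
    have h1 : v₀ + (1 / ((k : ℝ) + 1))⁻¹ • s ∈ subdiff (cpwlFun a α d β) zb := by
      apply hball' _ (Submodule.smul_mem _ _ hs)
      rw [norm_smul, norm_inv, Real.norm_eq_abs, abs_of_pos htk]
      rw [inv_mul_lt_iff₀ htk]
      calc ‖s‖ ≤ (1 / ((k : ℝ) + 1)) * (ε₀ / 2) := hsn
        _ < (1 / ((k : ℝ) + 1)) * ε₀ := by nlinarith
    have hcomb := subdiff_convex (a := a) (α := α) (d := d) (β := β) zb hvb h1
      (by linarith [htle k] : (0:ℝ) ≤ 1 - 1 / ((k : ℝ) + 1)) (le_of_lt htk) (by ring)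
    have : (1 - 1 / ((k : ℝ) + 1)) • vb
        + (1 / ((k : ℝ) + 1)) • (v₀ + (1 / ((k : ℝ) + 1))⁻¹ • s)
        = (vb + (1 / ((k : ℝ) + 1)) • (v₀ - vb)) + s := by
      rw [smul_add, smul_smul, mul_inv_cancel₀ (ne_of_gt htk), one_smul,
        smul_sub, sub_smul, one_smul]
      abel
    rwa [this] at hcomb
  have hΩmem : ∀ k : ℕ, pl2 zb (vb + (1 / ((k : ℝ) + 1)) • (v₀ - vb)) ∈
      {q : WithLp 2 (Euc m × Euc m) | ((WithLp.equiv 2 (Euc m × Euc m)) q).2 ∈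
        subdiff (cpwlFun a α d β) ((WithLp.equiv 2 (Euc m × Euc m)) q).1} := fun k => hvmem k
  refine ⟨fun k => pl2 zb (vb + (1 / ((k : ℝ) + 1)) • (v₀ - vb)), fun _ => pl2 w 0, hΩmem, ?_,
    tendsto_const_nhds, ?_⟩
  · rw [pl2_tendsto_iff]
    refine ⟨tendsto_const_nhds, ?_⟩
    show Filter.Tendsto (fun k : ℕ => vb + (1 / ((k : ℝ) + 1)) • (v₀ - vb)) Filter.atTop (𝓝 vb)
    have ht0 : Filter.Tendsto (fun k : ℕ => 1 / ((k : ℝ) + 1)) Filter.atTop (𝓝 0) :=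
      tendsto_one_div_add_atTop_nhds_zero_nat
    have := (ht0.smul_const (v₀ - vb)).const_add vb
    simpa using this
  · intro k
    rcases eq_or_ne w 0 with hw0 | hw0
    · rw [hw0]
      exact zero_mem_frechetNormal (hΩmem k)
    have hwn : 0 < ‖w‖ := norm_pos_iff.2 hw0
    have hρ : 0 < (1 / ((k : ℝ) + 1)) * (ε₀ / 2) := by positivity
    apply frechet_of_bound (hΩmem k) (C := ‖w‖ / ((1 / ((k : ℝ) + 1)) * (ε₀ / 2))) (by positivity)
    intro y hy
    have husub : ((WithLp.equiv 2 (Euc m × Euc m)) y).2 ∈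
        subdiff (cpwlFun a α d β) ((WithLp.equiv 2 (Euc m × Euc m)) y).1 := hy
    have hzdom : ((WithLp.equiv 2 (Euc m × Euc m)) y).1 ∈ cpwlDom d β :=
      mem_dom_of_subdiff husub zb hzb
    set ρ : ℝ := (1 / ((k : ℝ) + 1)) * (ε₀ / 2) with hρdef
    set vk : Euc m := vb + (1 / ((k : ℝ) + 1)) • (v₀ - vb) with hvk
    set z : Euc m := ((WithLp.equiv 2 (Euc m × Euc m)) y).1 with hz
    set u : Euc m := ((WithLp.equiv 2 (Euc m × Euc m)) y).2 with hu
    have hsub : y - pl2 zb vk = pl2 (z - zb) (u - vk) := rfl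
    rcases eq_or_ne (y - pl2 zb vk) 0 with hy0 | hy0
    · rw [hy0]
      simp
    have hN : 0 < ‖y - pl2 zb vk‖ := norm_pos_iff.2 hy0
    have hsmem : (ρ / ‖w‖) • w ∈ Spar (cpwlFun a α d β) zb := Submodule.smul_mem _ _ hw
    have hsnorm : ‖(ρ / ‖w‖) • w‖ = ρ := by
      rw [norm_smul, Real.norm_eq_abs, abs_of_pos (by positivity), div_mul_cancel₀]
      exact ne_of_gt hwn
    have hvks : vk + (ρ / ‖w‖) • w ∈ subdiff (cpwlFun a α d β) zb :=
      hrel k _ hsmem (le_of_eq hsnorm)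
    have hmono := subdiff_mono hvks husub hzb hzdom
    have hkey : (ρ / ‖w‖) * ⟪w, z - zb⟫ ≤ ⟪u - vk, z - zb⟫ := by
      rw [inner_sub_left, inner_add_left, real_inner_smul_left] at hmono
      rw [inner_sub_left]
      linarith
    have hCS : ⟪u - vk, z - zb⟫ ≤ ‖u - vk‖ * ‖z - zb‖ := real_inner_le_norm _ _
    have hn1 : ‖z - zb‖ ≤ ‖y - pl2 zb vk‖ := by
      rw [hsub]; exact pl2_norm_fst_le _ _
    have hn2 : ‖u - vk‖ ≤ ‖y - pl2 zb vk‖ := by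
      rw [hsub]; exact pl2_norm_snd_le _ _
    have hip : ⟪pl2 w (0 : Euc m), y - pl2 zb vk⟫ = ⟪w, z - zb⟫ := by
      rw [hsub, pl2_inner, inner_zero_left, add_zero]
    rw [hip, div_le_iff₀ hN]
    have hwzzb : ⟪w, z - zb⟫ ≤ (‖w‖ / ρ) * (‖u - vk‖ * ‖z - zb‖) := by
      have hstep := mul_le_mul_of_nonneg_left hkey
        (le_of_lt (by positivity : (0:ℝ) < ‖w‖ / ρ))
      calc ⟪w, z - zb⟫ = (‖w‖ / ρ) * ((ρ / ‖w‖) * ⟪w, z - zb⟫) := by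
            field_simp
          _ ≤ (‖w‖ / ρ) * ⟪u - vk, z - zb⟫ := hstep
          _ ≤ (‖w‖ / ρ) * (‖u - vk‖ * ‖z - zb‖) :=
            mul_le_mul_of_nonneg_left hCS (by positivity)
    have hwρ : 0 ≤ ‖w‖ / ρ := by positivity
    have hfin : (‖w‖ / ρ) * (‖u - vk‖ * ‖z - zb‖)
        ≤ (‖w‖ / ρ) * (‖y - pl2 zb vk‖ * ‖y - pl2 zb vk‖) :=
      mul_le_mul_of_nonneg_left (mul_le_mul hn2 hn1 (norm_nonneg _) (le_of_lt hN)) hwρ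
    nlinarith [hwzzb, hfin]

lemma pl2_tendsto_comp {ι : Type*} {L : Filter ι} {f : ι → Euc m} {g : ι → Euc m}
    {x y : Euc m} (hf : Filter.Tendsto f L (𝓝 x)) (hg : Filter.Tendsto g L (𝓝 y)) :
    Filter.Tendsto (fun i => pl2 (f i) (g i)) L (𝓝 (pl2 x y)) := by
  rw [pl2_tendsto_iff]
  exact ⟨hf, hg⟩

set_option maxHeartbeats 1000000 in
lemma sosd_subset_Spar (hl : 0 < l) {zb vb : Euc m} (hzb : zb ∈ cpwlDom d β)
    (hvb : vb ∈ subdiff (cpwlFun a α d β) zb) :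
    sosd (cpwlFun a α d β) zb vb 0 ⊆ (Spar (cpwlFun a α d β) zb : Set (Euc m)) := by
  intro w hw
  obtain ⟨xs, vs, hxsΩ, hxs, hvs, hfre⟩ := hw
  have hcomp := pl2_tendsto_iff.1 hxs
  have hztend : Filter.Tendsto (fun k => ((WithLp.equiv 2 (Euc m × Euc m)) (xs k)).1)
      Filter.atTop (𝓝 zb) := hcomp.1
  have hvtend : Filter.Tendsto (fun k => ((WithLp.equiv 2 (Euc m × Euc m)) (xs k)).2)
      Filter.atTop (𝓝 vb) := hcomp.2
  have hwtend : Filter.Tendsto (fun k => ((WithLp.equiv 2 (Euc m × Euc m)) (vs k)).1)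
      Filter.atTop (𝓝 w) := (pl2_tendsto_iff.1 hvs).1
  have hclaim : ∀ c : Euc m, c ∈ (Spar (cpwlFun a α d β) zb)ᗮ → ⟪c, w⟫ = 0 := by
    intro c hc
    rcases eq_or_ne c 0 with hc0 | hc0
    · rw [hc0]
      simp
    have hcn : (0:ℝ) < ‖c‖ := norm_pos_iff.2 hc0
    have hc' : ∀ s ∈ Spar (cpwlFun a α d β) zb, ⟪s, c⟫ = 0 :=
      fun s hs => (Submodule.mem_orthogonal _ c).1 hc s hs
    have hev := hztend.eventually (eventually_active (a := a) (α := α) hzb)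
    have hzero : ∀ᶠ k in Filter.atTop,
        ⟪c, ((WithLp.equiv 2 (Euc m × Euc m)) (vs k)).1⟫ = 0 := by
      filter_upwards [hev] with k hk
      obtain ⟨hK, hI⟩ := hk
      have husub : ((WithLp.equiv 2 (Euc m × Euc m)) (xs k)).2 ∈
          subdiff (cpwlFun a α d β) ((WithLp.equiv 2 (Euc m × Euc m)) (xs k)).1 := hxsΩ k
      have hzdom := mem_dom_of_subdiff husub zb hzb
      obtain ⟨ε, hε, hpers⟩ := persist hl hzb hvb hc' hzdom hK hI husub
      set zk := ((WithLp.equiv 2 (Euc m × Euc m)) (xs k)).1 with hzk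
      set vkk := ((WithLp.equiv 2 (Euc m × Euc m)) (xs k)).2 with hvkk
      set wk := ((WithLp.equiv 2 (Euc m × Euc m)) (vs k)).1 with hwk
      set uk := ((WithLp.equiv 2 (Euc m × Euc m)) (vs k)).2 with huk
      -- the curve
      have hxseq : xs k = pl2 zk vkk := rfl
      have hvseq : vs k = pl2 wk uk := rfl
      have hqsub : ∀ t : ℝ, pl2 (zk + t • c) vkk - xs k = pl2 (t • c) 0 := by
        intro t
        rw [hxseq, pl2_sub, add_sub_cancel_left, sub_self]
      have hqval : ∀ t : ℝ, t ≠ 0 →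
          ⟪vs k, pl2 (zk + t • c) vkk - xs k⟫ / ‖pl2 (zk + t • c) vkk - xs k‖
            = (t / |t|) * (⟪wk, c⟫ / ‖c‖) := by
        intro t ht
        rw [hqsub t, hvseq, pl2_inner, inner_zero_right, add_zero, pl2_norm_fst_zero,
          real_inner_smul_right, norm_smul, Real.norm_eq_abs]
        rw [div_mul_div_comm]
      have hqtend : ∀ L : Filter ℝ, L ≤ 𝓝 0 →
          Filter.Tendsto (fun t : ℝ => pl2 (zk + t • c) vkk) L (𝓝 (xs k)) := by
        intro L hL
        rw [hxseq]
        apply pl2_tendsto_comp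
        · have hco : Continuous fun t : ℝ => zk + t • c :=
            continuous_const.add (continuous_id.smul continuous_const)
          have h0 := hco.tendsto (0:ℝ)
          simp only [zero_smul, add_zero] at h0
          exact h0.mono_left hL
        · exact tendsto_const_nhds
      have habs : ∀ᶠ t in 𝓝 (0:ℝ), |t| ≤ ε := by
        have hball := isOpen_ball.eventually_mem (Metric.mem_ball_self hε (x := (0:ℝ)))
        filter_upwards [hball] with t ht
        rw [Metric.mem_ball, Real.dist_eq, sub_zero] at ht
        exact le_of_lt ht
      have hmemcurve : ∀ t : ℝ, |t| ≤ ε → pl2 (zk + t • c) vkk ∈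
          {q : WithLp 2 (Euc m × Euc m) | ((WithLp.equiv 2 (Euc m × Euc m)) q).2 ∈
            subdiff (cpwlFun a α d β) ((WithLp.equiv 2 (Euc m × Euc m)) q).1} :=
        fun t ht => hpers t ht
      -- positive side
      have hpos : ⟪wk, c⟫ / ‖c‖ ≤ 0 := by
        refine frechet_val_le (hfre k) (L := 𝓝[>] (0:ℝ))
          (q := fun t => pl2 (zk + t • c) vkk)
          ((hqtend _ nhdsWithin_le_nhds)) ?_ ?_
        · filter_upwards [habs.filter_mono nhdsWithin_le_nhds] with t ht
          exact hmemcurve t ht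
        · filter_upwards [self_mem_nhdsWithin] with t ht
          have ht' : (0:ℝ) < t := ht
          rw [hqval t (ne_of_gt ht'), abs_of_pos ht', div_self (ne_of_gt ht'), one_mul]
      -- negative side
      have hneg : -(⟪wk, c⟫ / ‖c‖) ≤ 0 := by
        refine frechet_val_le (hfre k) (L := 𝓝[<] (0:ℝ))
          (q := fun t => pl2 (zk + t • c) vkk)
          ((hqtend _ nhdsWithin_le_nhds)) ?_ ?_
        · filter_upwards [habs.filter_mono nhdsWithin_le_nhds] with t ht
          exact hmemcurve t ht
        · filter_upwards [self_mem_nhdsWithin] with t ht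
          have ht' : t < (0:ℝ) := ht
          rw [hqval t (ne_of_lt ht'), abs_of_neg ht']
          have hdd : t / -t = -1 := by
            rw [div_neg, div_self (ne_of_lt ht')]
          rw [hdd]
          ring
      have : ⟪wk, c⟫ / ‖c‖ = 0 := le_antisymm hpos (by linarith)
      have hwc : ⟪wk, c⟫ = 0 := by
        field_simp at this
        simpa using this
      rw [real_inner_comm]
      exact hwc
    have h1 : Filter.Tendsto (fun k => ⟪c, ((WithLp.equiv 2 (Euc m × Euc m)) (vs k)).1⟫)
        Filter.atTop (𝓝 ⟪c, w⟫) := by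
      have : Continuous fun x : Euc m => (⟪c, x⟫ : ℝ) := continuous_const.inner continuous_id
      exact (this.tendsto w).comp hwtend
    have h2 : Filter.Tendsto (fun k => ⟪c, ((WithLp.equiv 2 (Euc m × Euc m)) (vs k)).1⟫)
        Filter.atTop (𝓝 0) :=
      tendsto_const_nhds.congr' (hzero.mono fun k hk => hk.symm)
    exact tendsto_nhds_unique h1 h2
  have hmem : w ∈ ((Spar (cpwlFun a α d β) zb)ᗮ)ᗮ := by
    rw [Submodule.mem_orthogonal]
    exact hclaim
  rwa [Submodule.orthogonal_orthogonal] at hmem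

end main

end AuxLemmas

/-- For fully amenable compositions with CPWL outer function,
for each `v ∈ ∂θ(zb)` the condition `∂²θ(zb,v)(0) ∩ ker ∇ₓΦ(xb,wb)* = {0}` is equivalent
to `S(zb) ∩ ker ∇ₓΦ(xb,wb)* = {0}`; in particular the second-order qualification
condition over `M(xb,wb,qb)` holds (for any `qb` with `M(xb,wb,qb) ≠ ∅`) iff
`S(zb) ∩ ker ∇ₓΦ(xb,wb)* = {0}`. -/
theorem soqc_iff_parallel_subspace_cond {n dd m l p : ℕ} (hl : 0 < l)
    (a : Fin l → Euc m) (α : Fin l → ℝ) (d : Fin p → Euc m) (β : Fin p → ℝ)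
    (hdom : (cpwlDom d β).Nonempty)
    (Φ : Euc n × Euc dd → Euc m) (xb : Euc n) (wb : Euc dd)
    (hΦ : ContDiffAt ℝ 2 Φ (xb, wb)) (hzb : Φ (xb, wb) ∈ cpwlDom d β) :
    (∀ v ∈ subdiff (cpwlFun a α d β) (Φ (xb, wb)),
        (sosd (cpwlFun a α d β) (Φ (xb, wb)) v 0 ∩
            {y | ContinuousLinearMap.adjoint (fderiv ℝ (fun x => Φ (x, wb)) xb) y = 0} = {0} ↔
          (Spar (cpwlFun a α d β) (Φ (xb, wb)) : Set (Euc m)) ∩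
            {y | ContinuousLinearMap.adjoint (fderiv ℝ (fun x => Φ (x, wb)) xb) y = 0} = {0})) ∧
    (∀ qb : Euc n,
      {v ∈ subdiff (cpwlFun a α d β) (Φ (xb, wb)) |
          ContinuousLinearMap.adjoint (fderiv ℝ (fun x => Φ (x, wb)) xb) v = qb}.Nonempty →
      ((∀ v ∈ {v ∈ subdiff (cpwlFun a α d β) (Φ (xb, wb)) |
          ContinuousLinearMap.adjoint (fderiv ℝ (fun x => Φ (x, wb)) xb) v = qb},
          sosd (cpwlFun a α d β) (Φ (xb, wb)) v 0 ∩
            {y | ContinuousLinearMap.adjoint (fderiv ℝ (fun x => Φ (x, wb)) xb) y = 0} = {0}) ↔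
        (Spar (cpwlFun a α d β) (Φ (xb, wb)) : Set (Euc m)) ∩
          {y | ContinuousLinearMap.adjoint (fderiv ℝ (fun x => Φ (x, wb)) xb) y = 0} = {0})) := by
  have heq : ∀ v ∈ subdiff (cpwlFun a α d β) (Φ (xb, wb)),
      sosd (cpwlFun a α d β) (Φ (xb, wb)) v 0
        = (Spar (cpwlFun a α d β) (Φ (xb, wb)) : Set (Euc m)) :=
    fun v hv => Set.Subset.antisymm (sosd_subset_Spar hl hzb hv) (Spar_subset_sosd hl hzb hv)
  constructor
  · intro v hv
    rw [heq v hv]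
  · rintro qb ⟨v₀, hv₀⟩
    constructor
    · intro h
      have h2 := h v₀ hv₀
      rwa [heq v₀ hv₀.1] at h2
    · intro h v hv
      rw [heq v hv.1]
      exact h
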